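/- If G is a group in which some element g ≠ 1 has infinitely many roots (for infinitely many n there exists h with h^n = g), then G admits no midpointed convexoid. In particular, the additive groups ℚ and ℤ[1/n] (n ≥ 2) admit no midpointed convex geometry. -/

import Mathlib

open Pointwise

attribute [local instance] Classical.propDecidable

/-- The closure of a finite set `B`: intersection of all members of `𝒞` containing `B`. -/
def memClosure {G : Type*} (𝒞 : Set (Finset G)) (B : Finset G) : Set G :=
  {x | ∀ C ∈ 𝒞, B ⊆ C → x ∈ C}

/-- A convexoid: `∅` is a member, every finite set is contained in some member, and the
corner addition property holds. -/
def IsConvexoid {G : Type*} (𝒞 : Set (Finset G)) : Prop :=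
  (∅ : Finset G) ∈ 𝒞 ∧ (∀ B : Finset G, ∃ C ∈ 𝒞, B ⊆ C) ∧
    ∀ C ∈ 𝒞, ∀ D ∈ 𝒞, C ⊂ D → ∃ a ∈ D, a ∉ C ∧ insert a C ∈ 𝒞

/-- `𝒞` is midpointed: `g` lies in the closure of `{g*h, g*h⁻¹}` for all `g, h`. -/
def Midpointed {G : Type*} [Group G] (𝒞 : Set (Finset G)) : Prop :=
  ∀ g h : G, g ∈ memClosure 𝒞 {g * h, g * h⁻¹}

/-- The additive subgroup `ℤ[1/n]` of `ℚ`. -/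
def zInv (n : ℕ) : AddSubgroup ℚ :=
  AddSubgroup.closure {x : ℚ | ∃ k : ℕ, x = 1 / (n : ℚ) ^ k}

section Aux

variable {G : Type*} [Group G] {𝒞 : Set (Finset G)}

/-- algebraic helper: if `z` commutes with `y` and `z*z = x*y` then `z*y⁻¹*z = x`. -/
lemma sq_rel_aux {x y z : G} (hzy : Commute z y) (h : z * z = x * y) :
    z * y⁻¹ * z = x := by
  have h1 : y⁻¹ * z = z * y⁻¹ := (hzy.inv_right).symm.eq
  calc z * y⁻¹ * z = z * (y⁻¹ * z) := by rw [mul_assoc]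
    _ = z * (z * y⁻¹) := by rw [h1]
    _ = z * z * y⁻¹ := by rw [mul_assoc]
    _ = x * y * y⁻¹ := by rw [h]
    _ = x := by group

/-- Every member of a midpointed family is closed under taking midpoints. -/
lemma mem_of_rel (hmid : Midpointed 𝒞) {C : Finset G} (hC : C ∈ 𝒞) {x y z : G}
    (hx : x ∈ C) (hy : y ∈ C) (hrel : z * y⁻¹ * z = x) : z ∈ C := by
  have h2 : z * x⁻¹ * z = y := by rw [← hrel]; group
  have hm := hmid z (z⁻¹ * x)
  have eA : z * (z⁻¹ * x) = x := by group
  have eB : z * (z⁻¹ * x)⁻¹ = y := by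
    rw [mul_inv_rev, inv_inv, ← mul_assoc, h2]
  rw [eA, eB] at hm
  exact hm C hC (Finset.insert_subset_iff.mpr ⟨hx, Finset.singleton_subset_iff.mpr hy⟩)

/-- The growth engine: an invariant propagated along corner-addition chains from `Q` to `E`. -/
lemma grow (hconv : IsConvexoid 𝒞) {Q E : Finset G} (hQ : Q ∈ 𝒞) (hE : E ∈ 𝒞)
    (hQE : Q ⊆ E) (I : Finset G → Prop) (hIQ : I Q)
    (hstep : ∀ R, R ∈ 𝒞 → Q ⊆ R → R ⊆ E → I R →
      ∀ a, a ∈ E → a ∉ R → insert a R ∈ 𝒞 → I (insert a R)) : I E := by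
  have key : ∀ k (R : Finset G), R ∈ 𝒞 → Q ⊆ R → R ⊆ E → I R → (E \ R).card ≤ k → I E := by
    intro k
    induction k with
    | zero =>
      intro R hR hQR hRE hIR hcard
      have : E \ R = ∅ := Finset.card_eq_zero.mp (Nat.le_zero.mp hcard)
      have hER : E ⊆ R := by
        intro x hx
        by_contra hxx
        exact (Finset.notMem_empty x) (this ▸ Finset.mem_sdiff.mpr ⟨hx, hxx⟩)
      have : R = E := Finset.Subset.antisymm hRE hER
      exact this ▸ hIR
    | succ k IH =>
      intro R hR hQR hRE hIR hcard
      by_cases hER : E ⊆ R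
      · have : R = E := Finset.Subset.antisymm hRE hER
        exact this ▸ hIR
      · have hss : R ⊂ E := Finset.ssubset_iff_subset_ne.mpr ⟨hRE, fun h => hER (h ▸ Finset.Subset.refl _)⟩
        obtain ⟨a, haE, haR, hins⟩ := hconv.2.2 R hR E hE hss
        have hIa : I (insert a R) := hstep R hR hQR hRE hIR a haE haR hins
        have hsub' : insert a R ⊆ E := Finset.insert_subset haE hRE
        have hcard' : (E \ insert a R).card ≤ k := by
          rw [Finset.sdiff_insert]
          have hmem : a ∈ E \ R := Finset.mem_sdiff.mpr ⟨haE, haR⟩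
          rw [Finset.card_erase_of_mem hmem]
          omega
        exact IH (insert a R) hins (hQR.trans (Finset.subset_insert a R)) hsub' hIa hcard'
  exact key (E \ Q).card Q hQ (Finset.Subset.refl Q) hQE hIQ le_rfl

lemma pow_rel (h : G) {i p q : ℕ} (hpq : i + i = p + q) :
    h ^ i * (h ^ q)⁻¹ * h ^ i = h ^ p := by
  apply sq_rel_aux ((Commute.refl h).pow_pow i q)
  rw [← pow_add, ← pow_add, hpq]

/-- Injectivity of powers of a non-torsion element. -/
lemma pow_inj_of_nontorsion {h : G} (hnt : ∀ k : ℕ, k ≠ 0 → h ^ k ≠ 1) :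
    Function.Injective (fun i : ℕ => h ^ i) := by
  have key : ∀ i j : ℕ, i < j → h ^ i = h ^ j → False := by
    intro i j hlt he
    apply hnt (j - i) (by omega)
    have h1 : h ^ i * h ^ (j - i) = h ^ i * 1 := by
      rw [← pow_add, mul_one, show i + (j - i) = j by omega]
      exact he.symm
    exact mul_left_cancel h1
  intro i j hij
  simp only at hij
  rcases Nat.lt_trichotomy i j with hlt | heq | hgt
  · exact (key i j hlt hij).elim
  · exact heq
  · exact (key j i hgt hij.symm).elim

/-- Interval deadlock: a member containing `h^a` and `h^b` with `b - a` odd contains a pair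
of consecutive powers of `h`. -/
lemma pair_of_odd (hconv : IsConvexoid 𝒞) (hmid : Midpointed 𝒞) {Q : Finset G} (hQ : Q ∈ 𝒞)
    {h : G} (hinj : Function.Injective (fun i : ℕ => h ^ i)) :
    ∀ d : ℕ, Odd d → ∀ a b : ℕ, a < b → b - a = d → h ^ a ∈ Q → h ^ b ∈ Q →
      ∃ c : ℕ, h ^ c ∈ Q ∧ h ^ (c + 1) ∈ Q := by
  intro d
  induction d using Nat.strong_induction_on with
  | _ d IH =>
    intro hodd a b hab hd hQa hQb
    by_cases hd1 : d = 1
    · have hb : b = a + 1 := by omega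
      exact ⟨a, hQa, hb ▸ hQb⟩
    · have hodd' := Nat.odd_iff.mp hodd
      have hd3 : 3 ≤ d := by omega
      by_cases hint : ∃ j, a < j ∧ j < b ∧ h ^ j ∈ Q
      · obtain ⟨j, hja, hjb, hjQ⟩ := hint
        rcases Nat.even_or_odd (j - a) with he | ho
        · -- then b - j is odd
          have h1 : Odd (b - j) := by
            rw [Nat.odd_iff]; rw [Nat.even_iff] at he; omega
          exact IH (b - j) (by omega) h1 j b hjb rfl hjQ hQb
        · exact IH (j - a) (by omega) ho a j hja rfl hQa hjQ
      · push_neg at hint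
        exfalso
        set F : Finset G := (Finset.Ioo a b).image (fun j => h ^ j) with hF
        obtain ⟨E, hE, hQFE⟩ := hconv.2.1 (Q ∪ F)
        have hQE : Q ⊆ E := (Finset.union_subset_iff.mp hQFE).1
        have hFE : F ⊆ E := (Finset.union_subset_iff.mp hQFE).2
        have hIQ : ∀ f ∈ F, f ∉ Q := by
          intro f hf
          obtain ⟨j, hj, rfl⟩ := Finset.mem_image.mp hf
          rw [Finset.mem_Ioo] at hj
          exact hint j hj.1 hj.2
        have hIE : ∀ f ∈ F, f ∉ E := by
          refine grow hconv hQ hE hQE (fun R => ∀ f ∈ F, f ∉ R) hIQ ?_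
          intro R hR hQR hRE hIR a' ha'E ha'R hins f hfF hfin
          rcases Finset.mem_insert.mp hfin with rfl | hfR
          swap
          · exact hIR f hfF hfR
          -- f = a' was just added and lies in F : derive a contradiction
          obtain ⟨j, hj, hfj⟩ := Finset.mem_image.mp hfF
          subst hfj
          rw [Finset.mem_Ioo] at hj
          rcases Nat.even_or_odd (j - a) with he | ho
          · -- even case: source at a + e with j = a + 2e, base h^a
            obtain ⟨e, hee⟩ := he
            have he1 : 1 ≤ e := by omega
            have hjae : j = a + (e + e) := by omega
            have hrel : h ^ (a + e) * (h ^ a)⁻¹ * h ^ (a + e) = h ^ j :=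
              pow_rel h (by omega)
            have hmm : h ^ (a + e) ∈ insert (h ^ j) R :=
              mem_of_rel hmid hins (Finset.mem_insert_self _ R)
                (Finset.mem_insert_of_mem (hQR hQa)) hrel
            rcases Finset.mem_insert.mp hmm with heq | hmR
            · have := hinj heq
              omega
            · have : h ^ (a + e) ∈ F := Finset.mem_image.mpr
                ⟨a + e, Finset.mem_Ioo.mpr ⟨by omega, by omega⟩, rfl⟩
              exact hIR _ this hmR
          · -- odd case: j - a odd so b - j even, source at j + e with b = j + 2e, base h^b
            have hbje : Even (b - j) := by
              rw [Nat.even_iff]; rw [Nat.odd_iff] at ho; omega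
            obtain ⟨e, hee⟩ := hbje
            have he1 : 1 ≤ e := by omega
            have hrel : h ^ (j + e) * (h ^ b)⁻¹ * h ^ (j + e) = h ^ j :=
              pow_rel h (by omega)
            have hmm : h ^ (j + e) ∈ insert (h ^ j) R :=
              mem_of_rel hmid hins (Finset.mem_insert_self _ R)
                (Finset.mem_insert_of_mem (hQR hQb)) hrel
            rcases Finset.mem_insert.mp hmm with heq | hmR
            · have := hinj heq
              omega
            · have : h ^ (j + e) ∈ F := Finset.mem_image.mpr
                ⟨j + e, Finset.mem_Ioo.mpr ⟨by omega, by omega⟩, rfl⟩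
              exact hIR _ this hmR
        have hmemF : h ^ (a + 1) ∈ F := Finset.mem_image.mpr
          ⟨a + 1, Finset.mem_Ioo.mpr ⟨by omega, by omega⟩, rfl⟩
        exact hIE _ hmemF (hFE hmemF)

/-- Main theorem: no midpointed convexoid when some `g ≠ 1` has infinitely many roots. -/
theorem noMidpointedConvexoid {G : Type*} [Group G] {g : G} (hg : g ≠ 1)
    (hN : {n : ℕ | ∃ h : G, h ^ n = g}.Infinite) :
    ¬ ∃ 𝒞 : Set (Finset G), IsConvexoid 𝒞 ∧ Midpointed 𝒞 := by
  rintro ⟨𝒞, hconv, hmid⟩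
  set N : Set ℕ := {n : ℕ | ∃ h : G, h ^ n = g} with hNdef
  by_cases hTor : ∃ k : ℕ, k ≠ 0 ∧ g ^ k = 1
  · -- torsion case
    have hfin : IsOfFinOrder g := by
      obtain ⟨k, hk0, hk⟩ := hTor
      exact isOfFinOrder_iff_pow_eq_one.mpr ⟨k, Nat.pos_of_ne_zero hk0, hk⟩
    set d := orderOf g with hdd
    have hd0 : 0 < d := hfin.orderOf_pos
    have hd1 : d ≠ 1 := fun hh => hg (orderOf_eq_one_iff.mp hh)
    have hd2 : 2 ≤ d := by omega
    set F : Finset G := (Finset.range d).image (fun c => g ^ c) with hF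
    obtain ⟨E, hE, hFE⟩ := hconv.2.1 F
    have hpowF : ∀ n : ℕ, g ^ n ∈ F := by
      intro n
      have : g ^ n = g ^ (n % d) := (pow_mod_orderOf g n).symm
      rw [this]
      exact Finset.mem_image.mpr ⟨n % d, Finset.mem_range.mpr (Nat.mod_lt n hd0), rfl⟩
    have hIE : ¬ F ⊆ E := by
      refine grow hconv hconv.1 hE (Finset.empty_subset E) (fun R => ¬ F ⊆ R) ?_ ?_
      · intro hsub
        have : (1 : G) ∈ (∅ : Finset G) := hsub (by simpa using hpowF 0)
        simpa using this
      · intro R hR hQR hRE hIR a' ha'E ha'R hins hsub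
        -- all of F is in insert a' R, but not in R, so a' ∈ F and F \ {a'} ⊆ R
        have ha'F : a' ∈ F := by
          by_contra ha'F
          apply hIR
          intro f hf
          rcases Finset.mem_insert.mp (hsub hf) with rfl | hfR
          · exact absurd hf ha'F
          · exact hfR
        obtain ⟨c, _, hfc⟩ := Finset.mem_image.mp ha'F
        -- x = g^(c+1), y = g^(c+d-1)
        have hxF : g ^ (c + 1) ∈ F := hpowF _
        have hyF : g ^ (c + (d - 1)) ∈ F := hpowF _
        have hxne : g ^ (c + 1) ≠ a' := by
          rw [← hfc]
          intro hcon
          have h1 : g ^ c * g = g ^ c * 1 := by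
            rw [mul_one, ← pow_succ]
            exact hcon
          exact hg (mul_left_cancel h1)
        have hyne : g ^ (c + (d - 1)) ≠ a' := by
          rw [← hfc]
          intro hcon
          have h0 : g ^ c * g ^ (d - 1) = g ^ c * 1 := by
            rw [mul_one, ← pow_add]
            exact hcon
          have h1 : g ^ (d - 1) = 1 := mul_left_cancel h0
          have hdvd : d ∣ d - 1 := orderOf_dvd_of_pow_eq_one h1
          have := Nat.le_of_dvd (by omega) hdvd
          omega
        have hxR : g ^ (c + 1) ∈ R := by
          rcases Finset.mem_insert.mp (hsub hxF) with hh | hh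
          · exact absurd hh hxne
          · exact hh
        have hyR : g ^ (c + (d - 1)) ∈ R := by
          rcases Finset.mem_insert.mp (hsub hyF) with hh | hh
          · exact absurd hh hyne
          · exact hh
        -- relation : a' * y⁻¹ * a' = x  (uses g^d = 1)
        have hrel : g ^ c * (g ^ (c + (d - 1)))⁻¹ * g ^ c = g ^ (c + 1) := by
          apply sq_rel_aux ((Commute.refl g).pow_pow c (c + (d - 1)))
          have e1 : c + 1 + (c + (d - 1)) = (c + c) + d := by omega
          have key : g ^ (c + 1) * g ^ (c + (d - 1)) = g ^ c * g ^ c := by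
            calc g ^ (c + 1) * g ^ (c + (d - 1)) = g ^ (c + 1 + (c + (d - 1))) :=
                  (pow_add g _ _).symm
              _ = g ^ ((c + c) + d) := by rw [e1]
              _ = g ^ (c + c) * g ^ d := pow_add g _ _
              _ = g ^ (c + c) * 1 := by rw [hdd, pow_orderOf_eq_one]
              _ = g ^ c * g ^ c := by rw [mul_one, pow_add]
          exact key.symm
        have : a' ∈ R := mem_of_rel hmid hR hxR hyR (by rw [← hfc]; exact hrel)
        exact ha'R this
    exact hIE hFE
  · -- non-torsion case
    push_neg at hTor
    have hroot_nontor : ∀ (h : G) (n : ℕ), h ^ n = g → ∀ k : ℕ, k ≠ 0 → h ^ k ≠ 1 := by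
      intro h n hh k hk0 hk
      apply hTor k hk0
      rw [← hh, ← pow_mul, mul_comm, pow_mul, hk, one_pow]
    obtain ⟨Q, hQ, hQsub⟩ := hconv.2.1 {1, g}
    have h1Q : (1 : G) ∈ Q := hQsub (Finset.mem_insert_self _ _)
    have hgQ : g ∈ Q := hQsub (Finset.mem_insert_of_mem (Finset.mem_singleton_self g))
    by_cases h2 : ∀ K : ℕ, ∃ k, K ≤ k ∧ (2 ^ k) ∈ N
    · -- unbounded 2-powers: square-root descent makes Q too big
      obtain ⟨k, hkge, h, hh⟩ := h2 Q.card
      have hinj : Function.Injective (fun i : ℕ => h ^ i) :=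
        pow_inj_of_nontorsion (hroot_nontor h (2 ^ k) hh)
      have hdesc : ∀ j : ℕ, j ≤ k → h ^ (2 ^ (k - j)) ∈ Q := by
        intro j
        induction j with
        | zero => intro _; simpa [hh] using hgQ
        | succ j IHj =>
          intro hjk
          have hprev : h ^ (2 ^ (k - j)) ∈ Q := IHj (by omega)
          have hrel : h ^ (2 ^ (k - (j+1))) * (1 : G)⁻¹ * h ^ (2 ^ (k - (j+1))) =
              h ^ (2 ^ (k - j)) := by
            rw [inv_one, mul_one, ← pow_add]
            congr 1
            have : k - j = (k - (j + 1)) + 1 := by omega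
            rw [this, pow_succ]
            omega
          exact mem_of_rel hmid hQ hprev h1Q hrel
      -- k+1 distinct elements in Q
      have hsub2 : (Finset.range (k+1)).image (fun j => h ^ (2 ^ j)) ⊆ Q := by
        intro x hx
        obtain ⟨j, hj, rfl⟩ := Finset.mem_image.mp hx
        rw [Finset.mem_range] at hj
        have := hdesc (k - j) (by omega)
        have hkj : k - (k - j) = j := by omega
        rwa [hkj] at this
      have hcard : k + 1 ≤ Q.card := by
        have hinj2 : Function.Injective (fun j : ℕ => h ^ (2 ^ j)) :=
          hinj.comp (Nat.pow_right_injective (le_refl 2))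
        calc k + 1 = ((Finset.range (k+1)).image (fun j => h ^ (2 ^ j))).card := by
              rw [Finset.card_image_of_injective _ hinj2, Finset.card_range]
          _ ≤ Q.card := Finset.card_le_card hsub2
      omega
    · -- bounded 2-powers: infinitely many odd n in N
      push_neg at h2
      obtain ⟨K, hK⟩ := h2
      have hdvd_mem : ∀ n ∈ N, ∀ u v : ℕ, n = u * v → u ∈ N := by
        rintro n ⟨h, hh⟩ u v rfl
        exact ⟨h ^ v, by rw [← pow_mul, mul_comm]; exact hh⟩
      have hodd_unbounded : ∀ M : ℕ, ∃ m ∈ {m | m ∈ N ∧ Odd m}, M < m := by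
        intro M
        obtain ⟨n, hnN, hn⟩ := hN.exists_gt (2 ^ K * (M + 1))
        have hn0 : n ≠ 0 := by
          have : 0 < n := lt_of_le_of_lt (Nat.zero_le _) hn
          omega
        set a := n.factorization 2 with ha
        set u := n / 2 ^ a with hu
        have hfact : 2 ^ a * u = n := Nat.ordProj_mul_ordCompl_eq_self n 2
        have huN : u ∈ N := hdvd_mem n hnN u (2 ^ a) (by rw [← hfact, mul_comm])
        have h2aN : (2 ^ a) ∈ N := hdvd_mem n hnN (2 ^ a) u hfact.symm
        have haK : a < K := by
          by_contra haK
          exact hK a (by omega) h2aN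
        have hodd : Odd u := by
          rcases Nat.even_or_odd u with he | ho
          · exfalso
            obtain ⟨t, ht⟩ := he
            have hnd := Nat.not_dvd_ordCompl Nat.prime_two hn0
            rw [← ha, ← hu] at hnd
            exact hnd ⟨t, by omega⟩
          · exact ho
        refine ⟨u, ⟨huN, hodd⟩, ?_⟩
        -- u = n / 2^a ≥ n / 2^K > M
        have h2a : (2:ℕ) ^ a ≤ 2 ^ K := Nat.pow_le_pow_right (by norm_num) (by omega)
        have hs0 : 2 ^ K * (M + 1) < 2 ^ a * u := by rw [hfact]; exact hn
        have hs1 : 2 ^ a * u ≤ 2 ^ K * u := Nat.mul_le_mul_right u h2a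
        have hs2 : 2 ^ K * (M + 1) < 2 ^ K * u := lt_of_lt_of_le hs0 hs1
        have := Nat.lt_of_mul_lt_mul_left hs2
        omega
      have hSinf : {m | m ∈ N ∧ Odd m}.Infinite :=
        Set.infinite_of_forall_exists_gt hodd_unbounded
      -- from each odd m ∈ N, get a pair u v ∈ Q with (u⁻¹ * v)^m = g
      have hpair : ∀ m ∈ {m | m ∈ N ∧ Odd m}, ∃ u ∈ Q, ∃ v ∈ Q, (u⁻¹ * v) ^ m = g := by
        rintro m ⟨⟨h, hh⟩, hodd⟩
        have hinj : Function.Injective (fun i : ℕ => h ^ i) :=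
          pow_inj_of_nontorsion (hroot_nontor h m hh)
        have hm1 : 1 ≤ m := hodd.pos
        have h0Q : h ^ 0 ∈ Q := by simpa using h1Q
        have hmQ : h ^ m ∈ Q := by rwa [hh]
        obtain ⟨c, hc1, hc2⟩ := pair_of_odd hconv hmid hQ hinj m (by simpa using hodd)
          0 m (by omega) (by omega) h0Q hmQ
        refine ⟨h ^ c, hc1, h ^ (c + 1), hc2, ?_⟩
        have : (h ^ c)⁻¹ * h ^ (c + 1) = h := by
          rw [pow_succ, ← mul_assoc, inv_mul_cancel, one_mul]
        rw [this, hh]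
      -- pigeonhole over Q × Q
      have hchoice : ∀ m : ℕ, ∃ p : G × G, m ∈ {m | m ∈ N ∧ Odd m} →
          p.1 ∈ Q ∧ p.2 ∈ Q ∧ (p.1⁻¹ * p.2) ^ m = g := by
        intro m
        by_cases hm : m ∈ {m | m ∈ N ∧ Odd m}
        · obtain ⟨u, hu, v, hv, huv⟩ := hpair m hm
          exact ⟨(u, v), fun _ => ⟨hu, hv, huv⟩⟩
        · exact ⟨(1, 1), fun hc => absurd hc hm⟩
      choose f hf using hchoice
      have hmaps : Set.MapsTo f {m | m ∈ N ∧ Odd m} (↑(Q ×ˢ Q) : Set (G × G)) := by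
        intro m hm
        obtain ⟨h1, h2, _⟩ := hf m hm
        simp only [Finset.coe_product, Set.mem_prod]
        exact ⟨h1, h2⟩
      obtain ⟨m1, hm1, m2, hm2, hne, heq⟩ :=
        hSinf.exists_ne_map_eq_of_mapsTo hmaps (Q ×ˢ Q).finite_toSet
      -- wlog m1 < m2
      have key : ∀ m m' : ℕ, m ∈ {m | m ∈ N ∧ Odd m} → m' ∈ {m | m ∈ N ∧ Odd m} →
          m < m' → f m = f m' → False := by
        intro m m' hm hm' hlt hfeq
        obtain ⟨_, _, hg1⟩ := hf m hm
        obtain ⟨_, _, hg2⟩ := hf m' hm'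
        set r := (f m).1⁻¹ * (f m).2 with hr
        have hg2' : r ^ m' = g := by rw [hr, hfeq]; exact hg2
        have hg1' : r ^ m = g := hg1
        have hcancel : r ^ m * r ^ (m' - m) = r ^ m * 1 := by
          rw [← pow_add, mul_one]
          have : m + (m' - m) = m' := by omega
          rw [this, hg2', hg1']
        have hrk : r ^ (m' - m) = 1 := mul_left_cancel hcancel
        apply hTor (m' - m) (by omega)
        rw [← hg1', ← pow_mul, mul_comm, pow_mul, hrk, one_pow]
      rcases Nat.lt_or_ge m1 m2 with hlt | hge
      · exact key m1 m2 hm1 hm2 hlt heq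
      · exact key m2 m1 hm2 hm1 (by omega) heq.symm

end Aux

/-- A group in which some `g ≠ 1` has infinitely many roots admits no midpointed
convexoid; in particular `ℚ` and `ℤ[1/n]` (`n ≥ 2`) admit no midpointed convexoid
(a fortiori, no midpointed convex geometry). -/
theorem stmt17 :
    (∀ (G : Type) (_ : Group G) (g : G), g ≠ 1 →
        {n : ℕ | ∃ h : G, h ^ n = g}.Infinite →
        ¬ ∃ 𝒞 : Set (Finset G), IsConvexoid 𝒞 ∧ Midpointed 𝒞) ∧
      (¬ ∃ 𝒞 : Set (Finset (Multiplicative ℚ)), IsConvexoid 𝒞 ∧ Midpointed 𝒞) ∧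
      (∀ n : ℕ, 2 ≤ n →
        ¬ ∃ 𝒞 : Set (Finset (Multiplicative (zInv n))), IsConvexoid 𝒞 ∧ Midpointed 𝒞) := by
  refine ⟨?_, ?_, ?_⟩
  · intro G hG g hg hinf
    exact @noMidpointedConvexoid G hG g hg hinf
  · -- ℚ
    apply noMidpointedConvexoid (g := Multiplicative.ofAdd (1 : ℚ))
    · intro hcon
      have : (1 : ℚ) = 0 := by
        have := Multiplicative.toAdd.injective (a₁ := Multiplicative.ofAdd (1:ℚ)) (a₂ := 1)
        simpa using congrArg Multiplicative.toAdd hcon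
      norm_num at this
    · apply Set.Infinite.mono (s := {n : ℕ | 1 ≤ n})
      · intro n hn
        refine ⟨Multiplicative.ofAdd ((n : ℚ)⁻¹), ?_⟩
        have hn' : 1 ≤ n := hn
        have hn0 : (n : ℚ) ≠ 0 := by
          simp only [ne_eq, Nat.cast_eq_zero]
          omega
        rw [← ofAdd_nsmul]
        congr 1
        rw [nsmul_eq_mul, mul_inv_cancel₀ hn0]
      · have : {n : ℕ | 1 ≤ n} = Set.Ici 1 := rfl
        rw [this]
        exact Set.Ici_infinite 1
  · -- ℤ[1/n]
    intro n hn
    have h1mem : (1 : ℚ) ∈ zInv n := by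
      apply AddSubgroup.subset_closure
      exact ⟨0, by norm_num⟩
    apply noMidpointedConvexoid
      (g := Multiplicative.ofAdd (⟨1, h1mem⟩ : zInv n))
    · intro hcon
      have h0 := congrArg (fun x => (Multiplicative.toAdd x : zInv n).1) hcon
      simp only [toAdd_ofAdd, toAdd_one] at h0
      norm_num at h0
    · apply Set.Infinite.mono (s := Set.range (fun k : ℕ => n ^ k))
      · rintro m ⟨k, rfl⟩
        have hxmem : (1 / (n:ℚ) ^ k) ∈ zInv n := AddSubgroup.subset_closure ⟨k, rfl⟩
        refine ⟨Multiplicative.ofAdd (⟨1 / (n:ℚ)^k, hxmem⟩ : zInv n), ?_⟩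
        rw [← ofAdd_nsmul]
        congr 1
        apply Subtype.ext
        push_cast
        have hn0 : ((n:ℚ))^k ≠ 0 := by positivity
        rw [nsmul_eq_mul, Nat.cast_pow]
        field_simp
      · exact Set.infinite_range_of_injective (Nat.pow_right_injective hn)
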